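/- arXiv:2603.17137 — 6 statements merged into one kernel-verified Lean document; each statement's English description precedes it below -/
import Mathlib

section
/- Let v, w ∈ ℝ^m with w = Φ(v) the repeated ReLU (componentwise max with 0). Let Q₁, Q₂ ∈ ℝ^{m×m} be symmetric matrices with all entries nonnegative, and let Q₃ ∈ ℝ^{m×m} be a Metzler matrix (off-diagonal entries nonnegative). Then the quadratic form [v; w]ᵀ M [v; w] ≥ 0, where M is the 2m×2m block matrix with blocks M₁₁ = Q₁, M₁₂ = −Q₃ᵀ − Q₁, M₂₁ = −Q₃ − Q₁, M₂₂ = Q₁ + Q₂ + Q₃ + Q₃ᵀ. -/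
open Matrix

/-- Static QC for the repeated ReLU (Lemma 4). -/
theorem repeated_relu_static_QC (m : ℕ) (v w : Fin m → ℝ)
    (hw : ∀ i, w i = max (v i) 0)
    (Q₁ Q₂ Q₃ : Matrix (Fin m) (Fin m) ℝ)
    (hQ₁s : Q₁ᵀ = Q₁) (hQ₂s : Q₂ᵀ = Q₂)
    (hQ₁n : ∀ i j, 0 ≤ Q₁ i j) (hQ₂n : ∀ i j, 0 ≤ Q₂ i j)
    (hQ₃ : ∀ i j, i ≠ j → 0 ≤ Q₃ i j) :
    0 ≤ v ⬝ᵥ (Q₁ *ᵥ v) + v ⬝ᵥ ((-Q₃ᵀ - Q₁) *ᵥ w) + w ⬝ᵥ ((-Q₃ - Q₁) *ᵥ v)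
        + w ⬝ᵥ ((Q₁ + Q₂ + Q₃ + Q₃ᵀ) *ᵥ w) := by
  have hw0 : ∀ i, 0 ≤ w i := fun i => (hw i) ▸ le_max_right _ _
  have hvw : ∀ i, 0 ≤ w i - v i := fun i => by
    rw [hw i]; simp [sub_nonneg, le_max_left]
  have hcomp : ∀ i, w i * (w i - v i) = 0 := by
    intro i
    rcases le_or_gt (v i) 0 with h | h
    · rw [hw i, max_eq_right h]; ring
    · rw [hw i, max_eq_left h.le]; ring
  simp only [dotProduct, mulVec, Matrix.add_apply, Matrix.sub_apply, Matrix.neg_apply,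
    Matrix.transpose_apply, Finset.mul_sum]
  rw [← Finset.sum_add_distrib, ← Finset.sum_add_distrib, ← Finset.sum_add_distrib]
  apply Finset.sum_nonneg
  intro i _
  rw [← Finset.sum_add_distrib, ← Finset.sum_add_distrib, ← Finset.sum_add_distrib]
  apply Finset.sum_nonneg
  intro j _
  rcases eq_or_ne i j with rfl | hij
  · have h3 : Q₃ i i * (w i * (w i - v i)) = 0 := by rw [hcomp i]; ring
    nlinarith [h3, hQ₁n i i, hQ₂n i i, hw0 i, sq_nonneg (v i - w i),
      mul_nonneg (hQ₁n i i) (sq_nonneg (v i - w i)),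
      mul_nonneg (hQ₂n i i) (mul_nonneg (hw0 i) (hw0 i))]
  · nlinarith [hQ₁n i j, hQ₂n i j, hQ₃ i j hij, hQ₃ j i hij.symm, hw0 i, hw0 j,
      hvw i, hvw j,
      mul_nonneg (hQ₁n i j) (mul_nonneg (hvw i) (hvw j)),
      mul_nonneg (hQ₂n i j) (mul_nonneg (hw0 i) (hw0 j)),
      mul_nonneg (hQ₃ i j hij) (mul_nonneg (hw0 i) (hvw j)),
      mul_nonneg (hQ₃ j i hij.symm) (mul_nonneg (hw0 j) (hvw i))]
end

section
/- Let v, w ∈ ℝ^m with w = Φ(v) the repeated ReLU, and let Q₃ ∈ ℝ^{m×m} be a Metzler matrix. Then wᵀ Q₃ (w − v) ≥ 0. -/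
open Matrix

/-- wᵀ Q₃ (w - v) ≥ 0 for the repeated ReLU and a Metzler matrix Q₃. -/
theorem repeated_relu_Metzler_QC (m : ℕ) (v w : Fin m → ℝ)
    (hw : ∀ i, w i = max (v i) 0)
    (Q₃ : Matrix (Fin m) (Fin m) ℝ)
    (hQ₃ : ∀ i j, i ≠ j → 0 ≤ Q₃ i j) :
    0 ≤ w ⬝ᵥ (Q₃ *ᵥ (w - v)) := by
  have hwnn : ∀ i, 0 ≤ w i := fun i => (hw i).symm ▸ le_max_right _ _
  have hdnn : ∀ i, 0 ≤ w i - v i := by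
    intro i; rw [hw i]; simp [sub_nonneg, le_max_left]
  have hzero : ∀ i, w i * (w i - v i) = 0 := by
    intro i
    rcases le_or_gt (v i) 0 with h | h
    · rw [hw i, max_eq_right h]; ring
    · rw [hw i, max_eq_left h.le]; ring
  simp only [dotProduct, mulVec, Pi.sub_apply]
  apply Finset.sum_nonneg
  intro i _
  rw [Finset.mul_sum]
  apply Finset.sum_nonneg
  intro j _
  rcases eq_or_ne i j with rfl | hij
  · exact le_of_eq (by rw [show w i * (Q₃ i i * (w i - v i)) = Q₃ i i * (w i * (w i - v i)) from by ring, hzero i, mul_zero])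
  · have := hQ₃ i j hij
    have := hwnn i
    have := hdnn j
    positivity
end

section
/- Let f : ℝ → ℝ satisfy f(0) = 0 and be slope-restricted to [0,1], and let F : ℝ^m → ℝ^m apply f componentwise. If Q₀ ∈ ℝ^{m×m} is doubly hyperdominant (off-diagonal entries nonpositive, all row sums and all column sums nonnegative), then for all v ∈ ℝ^m with w = F(v): vᵀ Q₀ᵀ w + wᵀ Q₀ v − wᵀ (Q₀ + Q₀ᵀ) w ≥ 0. -/
open Matrix

open Finset

noncomputable def stepA (p t k : ℕ) : ℝ :=
  if p ≤ t then (if t ≤ k then 1 else 0) else (if k ≤ t then -1 else 0)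

noncomputable def coefc (p : ℕ) (X : ℕ → ℝ) (t : ℕ) : ℝ :=
  if p ≤ t then (if t = p then X p else X t - X (t-1))
  else (if t = p - 1 then - X t else X (t+1) - X t)

lemma tel_up (p : ℕ) (X : ℕ → ℝ) : ∀ k, p ≤ k → ∑ t ∈ Icc p k, coefc p X t = X k := by
  intro k hk
  induction k, hk using Nat.le_induction with
  | base => simp [coefc]
  | succ k hk ih =>
    rw [Finset.sum_Icc_succ_top (by omega), ih]
    have : coefc p X (k+1) = X (k+1) - X k := by
      rw [coefc, if_pos (by omega : p ≤ k+1), if_neg (by omega : ¬ k+1 = p)]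
      norm_num
    rw [this]; ring

lemma tel_down_aux (p : ℕ) (X : ℕ → ℝ) : ∀ d k, k + d = p - 1 → k < p →
    ∑ t ∈ Icc k (p-1), coefc p X t = - X k := by
  intro d
  induction d with
  | zero =>
    intro k hk hk2
    have hkk : k = p - 1 := by omega
    subst hkk
    rw [Finset.Icc_self, Finset.sum_singleton, coefc,
      if_neg (by omega : ¬ p ≤ p - 1), if_pos rfl]
  | succ d ih =>
    intro k hk hk2
    have h1 : k < p - 1 := by omega
    rw [(by rw [Finset.Icc_add_one_left_eq_Ioc, Finset.Icc_eq_cons_Ioc (by omega), Finset.cons_eq_insert] :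
        Icc k (p-1) = insert k (Icc (k+1) (p-1)))]
    rw [Finset.sum_insert (by simp), ih (k+1) (by omega) (by omega)]
    rw [coefc, if_neg (by omega : ¬ p ≤ k), if_neg (by omega : ¬ k = p - 1)]
    ring

lemma rep (m p : ℕ) (X : ℕ → ℝ) (hpm : p ≤ m) (k : ℕ) (hk : k < m) :
    X k = ∑ t ∈ range m, coefc p X t * stepA p t k := by
  by_cases hkp : p ≤ k
  · have hsub : Icc p k ⊆ range m := by
      intro x hx; simp only [mem_Icc] at hx; simp only [mem_range]; omega
    rw [← Finset.sum_subset hsub]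
    · rw [← tel_up p X k hkp]
      apply Finset.sum_congr rfl
      intro t ht
      simp only [mem_Icc] at ht
      rw [stepA, if_pos ht.1, if_pos ht.2, mul_one]
    · intro t ht hts
      simp only [mem_Icc, not_and_or, not_le] at hts
      rw [stepA]
      rcases hts with h | h <;> split_ifs <;> (first | ring1 | (exfalso; omega))
  · have hp1 : p - 1 < m := by omega
    have hsub : Icc k (p-1) ⊆ range m := by
      intro x hx; simp only [mem_Icc] at hx; simp only [mem_range]; omega
    rw [← Finset.sum_subset hsub]
    · have htd := tel_down_aux p X (p - 1 - k) k (by omega) (by omega)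
      have h2 : ∑ t ∈ Icc k (p-1), coefc p X t * stepA p t k
          = - ∑ t ∈ Icc k (p-1), coefc p X t := by
        rw [← Finset.sum_neg_distrib]
        apply Finset.sum_congr rfl
        intro t ht
        simp only [mem_Icc] at ht
        rw [stepA, if_neg (by omega : ¬ p ≤ t), if_pos (by omega : k ≤ t)]
        ring
      rw [h2, htd]; ring
    · intro t ht hts
      simp only [mem_Icc, not_and_or, not_le] at hts
      rw [stepA]
      rcases hts with h | h <;> split_ifs <;> (first | ring1 | (exfalso; omega))

lemma coefc_nonneg (m p : ℕ) (X : ℕ → ℝ) (hpm : p ≤ m)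
    (hmono : ∀ a b, a ≤ b → b < m → X a ≤ X b)
    (hsign : ∀ k, k < m → (k < p → X k ≤ 0) ∧ (p ≤ k → 0 ≤ X k)) :
    ∀ t, t < m → 0 ≤ coefc p X t := by
  intro t ht
  rw [coefc]
  split_ifs with h1 h2 h3
  · subst h2; exact (hsign t ht).2 h1
  · have := hmono (t-1) t (by omega) ht; linarith
  · have := (hsign t ht).1 (by omega); linarith
  · have := hmono t (t+1) (by omega) (by omega); linarith
open Finset

-- row-sum helper: sum of g over an "allowed" region is ≥ 0 if the total is ≥ 0
-- and g is ≤ 0 outside the region.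
lemma sum_ite_nonneg (m : ℕ) (g : ℕ → ℝ) (P : ℕ → Prop) [DecidablePred P]
    (h0 : 0 ≤ ∑ l ∈ range m, g l) (hneg : ∀ l, l < m → ¬ P l → g l ≤ 0) :
    0 ≤ ∑ l ∈ range m, g l * (if P l then 1 else 0) := by
  have key : ∀ l, l < m → g l * (if P l then 1 else 0) = g l - (if P l then 0 else g l) := by
    intro l hl
    split_ifs <;> ring
  rw [Finset.sum_congr rfl (fun l hl => key l (mem_range.mp hl)), Finset.sum_sub_distrib]
  have h2 : ∑ l ∈ range m, (if P l then 0 else g l) ≤ 0 := by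
    apply Finset.sum_nonpos
    intro l hl
    split_ifs with h
    · exact le_refl 0
    · exact hneg l (mem_range.mp hl) h
  linarith

lemma both_pos (m : ℕ) (Q : ℕ → ℕ → ℝ)
    (hoff : ∀ k l, k < m → l < m → k ≠ l → Q k l ≤ 0)
    (hrow : ∀ k, k < m → 0 ≤ ∑ l ∈ range m, Q k l)
    (hcol : ∀ l, l < m → 0 ≤ ∑ k ∈ range m, Q k l)
    (P R : ℕ → Prop) [DecidablePred P] [DecidablePred R]
    (hcase : (∀ k l, P k → ¬ R l → k ≠ l) ∨ (∀ k l, R l → ¬ P k → k ≠ l)) :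
    0 ≤ ∑ k ∈ range m, ∑ l ∈ range m,
      Q k l * (if P k then 1 else 0) * (if R l then 1 else 0) := by
  rcases hcase with hc | hc
  · apply Finset.sum_nonneg
    intro k hk
    by_cases hPk : P k
    · simp only [if_pos hPk, mul_one]
      exact sum_ite_nonneg m (Q k) R (hrow k (mem_range.mp hk))
        (fun l hl hnr => hoff k l (mem_range.mp hk) hl (hc k l hPk hnr))
    · simp [hPk]
  · rw [Finset.sum_comm]
    apply Finset.sum_nonneg
    intro l hl
    by_cases hRl : R l
    · simp only [if_pos hRl, mul_one]
      exact sum_ite_nonneg m (fun k => Q k l) P (hcol l (mem_range.mp hl))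
        (fun k hk hnp => hoff k l hk (mem_range.mp hl) (hc k l hRl hnp))
    · simp [hRl]

lemma B_nonneg (m p : ℕ) (Q : ℕ → ℕ → ℝ)
    (hoff : ∀ k l, k < m → l < m → k ≠ l → Q k l ≤ 0)
    (hrow : ∀ k, k < m → 0 ≤ ∑ l ∈ range m, Q k l)
    (hcol : ∀ l, l < m → 0 ≤ ∑ k ∈ range m, Q k l)
    (t s : ℕ) (ht : t < m) (hs : s < m) :
    0 ≤ ∑ k ∈ range m, ∑ l ∈ range m, Q k l * stepA p t k * stepA p s l := by
  by_cases hpt : p ≤ t <;> by_cases hps : p ≤ s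
  · -- both upper steps
    have e1 : ∀ k, stepA p t k = (if t ≤ k then (1:ℝ) else 0) := fun k => if_pos hpt
    have e2 : ∀ l, stepA p s l = (if s ≤ l then (1:ℝ) else 0) := fun l => if_pos hps
    simp only [e1, e2]
    apply both_pos m Q hoff hrow hcol
    rcases le_total s t with h | h
    · exact Or.inl (fun k l h1 h2 => by omega)
    · exact Or.inr (fun k l h1 h2 => by omega)
  · -- upper/lower: disjoint supports
    have e1 : ∀ k, stepA p t k = (if t ≤ k then (1:ℝ) else 0) := fun k => if_pos hpt
    have e2 : ∀ l, stepA p s l = (if l ≤ s then (-1:ℝ) else 0) := fun l => if_neg hps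
    simp only [e1, e2]
    apply Finset.sum_nonneg; intro k hk
    apply Finset.sum_nonneg; intro l hl
    rw [mem_range] at hk hl
    split_ifs with h1 h2 h2
    · have hq := hoff k l hk hl (by omega); nlinarith
    · norm_num
    · norm_num
    · norm_num
  · -- lower/upper
    have e1 : ∀ k, stepA p t k = (if k ≤ t then (-1:ℝ) else 0) := fun k => if_neg hpt
    have e2 : ∀ l, stepA p s l = (if s ≤ l then (1:ℝ) else 0) := fun l => if_pos hps
    simp only [e1, e2]
    apply Finset.sum_nonneg; intro k hk
    apply Finset.sum_nonneg; intro l hl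
    rw [mem_range] at hk hl
    split_ifs with h1 h2 h2
    · have hq := hoff k l hk hl (by omega); nlinarith
    · norm_num
    · norm_num
    · norm_num
  · -- both lower steps
    have e1 : ∀ k, stepA p t k = (if k ≤ t then (-1:ℝ) else 0) := fun k => if_neg hpt
    have e2 : ∀ l, stepA p s l = (if l ≤ s then (-1:ℝ) else 0) := fun l => if_neg hps
    simp only [e1, e2]
    have key : ∀ k l : ℕ, Q k l * (if k ≤ t then (-1:ℝ) else 0) * (if l ≤ s then (-1:ℝ) else 0)
        = Q k l * (if k ≤ t then (1:ℝ) else 0) * (if l ≤ s then (1:ℝ) else 0) := by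
      intro k l; split_ifs <;> ring
    simp only [key]
    apply both_pos m Q hoff hrow hcol
    rcases le_total t s with h | h
    · exact Or.inl (fun k l h1 h2 => by omega)
    · exact Or.inr (fun k l h1 h2 => by omega)

lemma core_QC (m p : ℕ) (hpm : p ≤ m) (Q : ℕ → ℕ → ℝ) (X Y : ℕ → ℝ)
    (hoff : ∀ k l, k < m → l < m → k ≠ l → Q k l ≤ 0)
    (hrow : ∀ k, k < m → 0 ≤ ∑ l ∈ range m, Q k l)
    (hcol : ∀ l, l < m → 0 ≤ ∑ k ∈ range m, Q k l)
    (hXm : ∀ a b, a ≤ b → b < m → X a ≤ X b)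
    (hYm : ∀ a b, a ≤ b → b < m → Y a ≤ Y b)
    (hXs : ∀ k, k < m → (k < p → X k ≤ 0) ∧ (p ≤ k → 0 ≤ X k))
    (hYs : ∀ k, k < m → (k < p → Y k ≤ 0) ∧ (p ≤ k → 0 ≤ Y k)) :
    0 ≤ ∑ k ∈ range m, ∑ l ∈ range m, Q k l * X k * Y l := by
  have key : ∑ k ∈ range m, ∑ l ∈ range m, Q k l * X k * Y l
      = ∑ t ∈ range m, ∑ s ∈ range m, (coefc p X t * coefc p Y s *
          ∑ k ∈ range m, ∑ l ∈ range m, Q k l * stepA p t k * stepA p s l) := by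
    have step1 : ∀ k, k < m → ∀ l, l < m →
        Q k l * X k * Y l = ∑ t ∈ range m, ∑ s ∈ range m,
          coefc p X t * coefc p Y s * (Q k l * stepA p t k * stepA p s l) := by
      intro k hk l hl
      rw [rep m p X hpm k hk, rep m p Y hpm l hl]
      rw [mul_assoc, Finset.sum_mul_sum]
      rw [Finset.mul_sum]
      apply Finset.sum_congr rfl
      intro t _
      rw [Finset.mul_sum]
      apply Finset.sum_congr rfl
      intro s _
      ring
    calc ∑ k ∈ range m, ∑ l ∈ range m, Q k l * X k * Y l
        = ∑ k ∈ range m, ∑ l ∈ range m, ∑ t ∈ range m, ∑ s ∈ range m,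
            coefc p X t * coefc p Y s * (Q k l * stepA p t k * stepA p s l) := by
          apply Finset.sum_congr rfl; intro k hk
          apply Finset.sum_congr rfl; intro l hl
          exact step1 k (mem_range.mp hk) l (mem_range.mp hl)
      _ = ∑ k ∈ range m, ∑ t ∈ range m, ∑ l ∈ range m, ∑ s ∈ range m,
            coefc p X t * coefc p Y s * (Q k l * stepA p t k * stepA p s l) := by
          apply Finset.sum_congr rfl; intro k _
          exact Finset.sum_comm
      _ = ∑ t ∈ range m, ∑ k ∈ range m, ∑ l ∈ range m, ∑ s ∈ range m,
            coefc p X t * coefc p Y s * (Q k l * stepA p t k * stepA p s l) := by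
          exact Finset.sum_comm
      _ = ∑ t ∈ range m, ∑ k ∈ range m, ∑ s ∈ range m, ∑ l ∈ range m,
            coefc p X t * coefc p Y s * (Q k l * stepA p t k * stepA p s l) := by
          apply Finset.sum_congr rfl; intro t _
          apply Finset.sum_congr rfl; intro k _
          exact Finset.sum_comm
      _ = ∑ t ∈ range m, ∑ s ∈ range m, ∑ k ∈ range m, ∑ l ∈ range m,
            coefc p X t * coefc p Y s * (Q k l * stepA p t k * stepA p s l) := by
          apply Finset.sum_congr rfl; intro t _
          exact Finset.sum_comm
      _ = ∑ t ∈ range m, ∑ s ∈ range m, (coefc p X t * coefc p Y s *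
            ∑ k ∈ range m, ∑ l ∈ range m, Q k l * stepA p t k * stepA p s l) := by
          apply Finset.sum_congr rfl; intro t _
          apply Finset.sum_congr rfl; intro s _
          rw [Finset.mul_sum]
          apply Finset.sum_congr rfl; intro k _
          rw [Finset.mul_sum]
  rw [key]
  apply Finset.sum_nonneg; intro t ht
  apply Finset.sum_nonneg; intro s hs
  rw [mem_range] at ht hs
  exact mul_nonneg
    (mul_nonneg (coefc_nonneg m p X hpm hXm hXs t ht) (coefc_nonneg m p Y hpm hYm hYs s hs))
    (B_nonneg m p Q hoff hrow hcol t s ht hs)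

lemma fin_core (m : ℕ) (Q : Matrix (Fin m) (Fin m) ℝ) (X Y : Fin m → ℝ) (p : ℕ) (hpm : p ≤ m)
    (hoff : ∀ i j : Fin m, i ≠ j → Q i j ≤ 0)
    (hrow : ∀ i, 0 ≤ ∑ j, Q i j) (hcol : ∀ j, 0 ≤ ∑ i, Q i j)
    (hXm : ∀ a b : Fin m, a ≤ b → X a ≤ X b) (hYm : ∀ a b : Fin m, a ≤ b → Y a ≤ Y b)
    (hXs : ∀ k : Fin m, (k.val < p → X k ≤ 0) ∧ (p ≤ k.val → 0 ≤ X k))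
    (hYs : ∀ k : Fin m, (k.val < p → Y k ≤ 0) ∧ (p ≤ k.val → 0 ≤ Y k)) :
    0 ≤ ∑ k : Fin m, ∑ l : Fin m, Q k l * X k * Y l := by
  classical
  set Qn : ℕ → ℕ → ℝ := fun k l => if h : k < m ∧ l < m then Q ⟨k, h.1⟩ ⟨l, h.2⟩ else 0 with hQn
  set Xn : ℕ → ℝ := fun k => if h : k < m then X ⟨k, h⟩ else 0 with hXn
  set Yn : ℕ → ℝ := fun k => if h : k < m then Y ⟨k, h⟩ else 0 with hYn
  have hQnv : ∀ k l : Fin m, Qn k.val l.val = Q k l := by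
    intro k l
    simp only [hQn]
    rw [dif_pos (And.intro k.isLt l.isLt)]
  have hXnv : ∀ k : Fin m, Xn k.val = X k := by
    intro k; simp only [hXn]; rw [dif_pos k.isLt]
  have hYnv : ∀ k : Fin m, Yn k.val = Y k := by
    intro k; simp only [hYn]; rw [dif_pos k.isLt]
  have main : 0 ≤ ∑ k ∈ range m, ∑ l ∈ range m, Qn k l * Xn k * Yn l := by
    apply core_QC m p hpm Qn Xn Yn
    · intro k l hk hl hkl
      simp only [hQn]
      rw [dif_pos (And.intro hk hl)]
      exact hoff _ _ (fun h => hkl (congrArg Fin.val h))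
    · intro k hk
      have : ∑ l ∈ range m, Qn k l = ∑ l : Fin m, Q ⟨k, hk⟩ l := by
        rw [← Fin.sum_univ_eq_sum_range (fun l => Qn k l) m]
        apply Finset.sum_congr rfl
        intro l _
        simp only [hQn]; rw [dif_pos (And.intro hk l.isLt)]
      rw [this]; exact hrow _
    · intro l hl
      have : ∑ k ∈ range m, Qn k l = ∑ k : Fin m, Q k ⟨l, hl⟩ := by
        rw [← Fin.sum_univ_eq_sum_range (fun k => Qn k l) m]
        apply Finset.sum_congr rfl
        intro k _
        simp only [hQn]; rw [dif_pos (And.intro k.isLt hl)]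
      rw [this]; exact hcol _
    · intro a b hab hb
      simp only [hXn]; rw [dif_pos (lt_of_le_of_lt hab hb), dif_pos hb]
      exact hXm _ _ hab
    · intro a b hab hb
      simp only [hYn]; rw [dif_pos (lt_of_le_of_lt hab hb), dif_pos hb]
      exact hYm _ _ hab
    · intro k hk
      simp only [hXn]; rw [dif_pos hk]
      exact hXs ⟨k, hk⟩
    · intro k hk
      simp only [hYn]; rw [dif_pos hk]
      exact hYs ⟨k, hk⟩
  have conv : ∑ k : Fin m, ∑ l : Fin m, Q k l * X k * Y l
      = ∑ k ∈ range m, ∑ l ∈ range m, Qn k l * Xn k * Yn l := by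
    rw [← Fin.sum_univ_eq_sum_range (fun k => ∑ l ∈ range m, Qn k l * Xn k * Yn l) m]
    apply Finset.sum_congr rfl
    intro k _
    rw [← Fin.sum_univ_eq_sum_range (fun l => Qn k.val l * Xn k.val * Yn l) m]
    apply Finset.sum_congr rfl
    intro l _
    rw [hQnv, hXnv, hYnv]
  rw [conv]; exact main


/-- Static QC for repeated slope-restricted nonlinearity with a doubly
hyperdominant multiplier (Lemma 2). -/
theorem slope_restricted_doubly_hyperdominant_QC (m : ℕ)
    (f : ℝ → ℝ) (hf0 : f 0 = 0)
    (hslope : ∀ a b : ℝ, a ≠ b →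
      0 ≤ (f b - f a) / (b - a) ∧ (f b - f a) / (b - a) ≤ 1)
    (Q₀ : Matrix (Fin m) (Fin m) ℝ)
    (hoff : ∀ i j, i ≠ j → Q₀ i j ≤ 0)
    (hrow : ∀ i, 0 ≤ ∑ j, Q₀ i j)
    (hcol : ∀ j, 0 ≤ ∑ i, Q₀ i j)
    (v w : Fin m → ℝ) (hw : ∀ i, w i = f (v i)) :
    0 ≤ v ⬝ᵥ (Q₀ᵀ *ᵥ w) + w ⬝ᵥ (Q₀ *ᵥ v) - w ⬝ᵥ ((Q₀ + Q₀ᵀ) *ᵥ w) := by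
  classical
  -- basic consequences of the slope restriction
  have fmono : ∀ x y : ℝ, x ≤ y → f x ≤ f y := by
    intro x y h
    rcases eq_or_lt_of_le h with h | h
    · rw [h]
    · have h1 := (hslope x y (ne_of_lt h)).1
      have h2 : f y - f x = ((f y - f x) / (y - x)) * (y - x) :=
        (div_mul_cancel₀ _ (sub_ne_zero.mpr (ne_of_gt h))).symm
      nlinarith [sub_pos.mpr h]
  have fslip : ∀ x y : ℝ, x ≤ y → f y - f x ≤ y - x := by
    intro x y h
    rcases eq_or_lt_of_le h with h | h
    · rw [h]; ring_nf; exact le_refl _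
    · have h1 := (hslope x y (ne_of_lt h)).2
      have h2 : f y - f x = ((f y - f x) / (y - x)) * (y - x) :=
        (div_mul_cancel₀ _ (sub_ne_zero.mpr (ne_of_gt h))).symm
      nlinarith [sub_pos.mpr h]
  -- algebraic reduction to a double sum
  have h1 : v ⬝ᵥ (Q₀ᵀ *ᵥ w) = ∑ i, ∑ j, Q₀ i j * w i * v j := by
    simp only [dotProduct, mulVec, transpose_apply, Finset.mul_sum]
    rw [Finset.sum_comm]
    exact Finset.sum_congr rfl fun i _ => Finset.sum_congr rfl fun j _ => by ring
  have h2 : w ⬝ᵥ (Q₀ *ᵥ v) = ∑ i, ∑ j, Q₀ i j * w i * v j := by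
    simp only [dotProduct, mulVec, Finset.mul_sum]
    exact Finset.sum_congr rfl fun i _ => Finset.sum_congr rfl fun j _ => by ring
  have h3 : w ⬝ᵥ ((Q₀ + Q₀ᵀ) *ᵥ w) = 2 * ∑ i, ∑ j, Q₀ i j * w i * w j := by
    simp only [dotProduct, mulVec, Matrix.add_apply, transpose_apply, Finset.mul_sum]
    have e : ∀ i j : Fin m, w i * ((Q₀ i j + Q₀ j i) * w j)
        = Q₀ i j * w i * w j + Q₀ j i * w j * w i := by intro i j; ring
    rw [Finset.sum_congr rfl fun i _ => Finset.sum_congr rfl fun j _ => e i j]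
    rw [Finset.sum_congr rfl fun i (_ : i ∈ Finset.univ) => Finset.sum_add_distrib]
    rw [Finset.sum_add_distrib]
    rw [show ∑ i, ∑ j, Q₀ j i * w j * w i = ∑ j, ∑ i, Q₀ j i * w j * w i from Finset.sum_comm]
    rw [← Finset.sum_add_distrib]
    apply Finset.sum_congr rfl; intro i _
    rw [← Finset.sum_add_distrib]
    apply Finset.sum_congr rfl; intro j _
    ring
  have expand : v ⬝ᵥ (Q₀ᵀ *ᵥ w) + w ⬝ᵥ (Q₀ *ᵥ v) - w ⬝ᵥ ((Q₀ + Q₀ᵀ) *ᵥ w)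
      = 2 * ∑ i, ∑ j, Q₀ i j * w i * (v j - w j) := by
    rw [h1, h2, h3]
    have e : ∀ i j : Fin m, Q₀ i j * w i * (v j - w j)
        = Q₀ i j * w i * v j - Q₀ i j * w i * w j := by intro i j; ring
    rw [Finset.sum_congr rfl fun i (_ : i ∈ Finset.univ) =>
      Finset.sum_congr rfl fun j (_ : j ∈ Finset.univ) => e i j]
    rw [Finset.sum_congr rfl fun i (_ : i ∈ Finset.univ) => Finset.sum_sub_distrib _ _]
    rw [Finset.sum_sub_distrib]
    ring
  rw [expand]
  -- sort the inputs
  set σ := Tuple.sort v with hσ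
  have hUm : Monotone (v ∘ σ) := Tuple.monotone_sort v
  have key : 0 ≤ ∑ i, ∑ j, Q₀ i j * w i * (v j - w j) := by
    have hre : ∑ i, ∑ j, Q₀ i j * w i * (v j - w j)
        = ∑ k, ∑ l, Q₀ (σ k) (σ l) * w (σ k) * (v (σ l) - w (σ l)) := by
      rw [← Equiv.sum_comp σ (fun i => ∑ j, Q₀ i j * w i * (v j - w j))]
      apply Finset.sum_congr rfl
      intro k _
      rw [← Equiv.sum_comp σ (fun j => Q₀ (σ k) j * w (σ k) * (v j - w j))]
    rw [hre]
    set S : Finset (Fin m) := Finset.univ.filter (fun k => v (σ k) < 0) with hS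
    set p := S.card with hp
    have hpm : p ≤ m := by
      rw [hp]
      calc S.card ≤ Finset.univ.card := Finset.card_filter_le _ _
        _ = m := by simp
    have hchar : ∀ k : Fin m, (k.val < p ↔ v (σ k) < 0) := by
      intro k
      constructor
      · intro hk
        by_contra hvk
        push_neg at hvk
        have hsub : S ⊆ Finset.Iio k := by
          intro j hj
          rw [hS, Finset.mem_filter] at hj
          rw [Finset.mem_Iio]
          by_contra hjk
          push_neg at hjk
          have := hUm hjk
          simp only [Function.comp_apply] at this
          linarith [hj.2]
        have := Finset.card_le_card hsub
        rw [Fin.card_Iio] at this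
        omega
      · intro hvk
        have hsub : Finset.Iic k ⊆ S := by
          intro j hj
          rw [Finset.mem_Iic] at hj
          rw [hS, Finset.mem_filter]
          refine ⟨Finset.mem_univ _, ?_⟩
          have := hUm hj
          simp only [Function.comp_apply] at this
          linarith
        have := Finset.card_le_card hsub
        rw [Fin.card_Iic] at this
        omega
    apply fin_core m (fun k l => Q₀ (σ k) (σ l)) (fun k => w (σ k))
      (fun l => v (σ l) - w (σ l)) p hpm
    · intro i j hij
      exact hoff _ _ (σ.injective.ne hij)
    · intro i
      rw [Equiv.sum_comp σ (fun j => Q₀ (σ i) j)]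
      exact hrow _
    · intro j
      rw [Equiv.sum_comp σ (fun i => Q₀ i (σ j))]
      exact hcol _
    · intro a b hab
      rw [hw, hw]
      exact fmono _ _ (hUm hab)
    · intro a b hab
      rw [hw, hw]
      have := fslip (v (σ a)) (v (σ b)) (hUm hab)
      linarith
    · intro k
      rw [hw]
      constructor
      · intro hk
        have hv := (hchar k).mp hk
        calc f (v (σ k)) ≤ f 0 := fmono _ _ (le_of_lt hv)
          _ = 0 := hf0
      · intro hk
        have hv : 0 ≤ v (σ k) := by
          by_contra hvk
          push_neg at hvk
          have := (hchar k).mpr hvk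
          omega
        calc (0:ℝ) = f 0 := hf0.symm
          _ ≤ f (v (σ k)) := fmono _ _ hv
    · intro k
      rw [hw]
      constructor
      · intro hk
        have hv := (hchar k).mp hk
        have := fslip (v (σ k)) 0 (le_of_lt hv)
        rw [hf0] at this
        linarith
      · intro hk
        have hv : 0 ≤ v (σ k) := by
          by_contra hvk
          push_neg at hvk
          have := (hchar k).mpr hvk
          omega
        have := fslip 0 (v (σ k)) hv
        rw [hf0] at this
        linarith
  linarith
end

section
/- Let {Qᵢ}_{i=−N}^{N} ⊂ ℝ^{m×m} satisfy: (i) all entries of Qᵢ are nonpositive for i ≠ 0; (ii) all off-diagonal entries of Q₀ are nonpositive; (iii) each row sum of the horizontal concatenation [Q₋N, …, Q₋₁, Q₀, Q₁, …, Q_N] is nonnegative; (iv) each column sum of the vertical concatenation [Q₋Nᵀ; …; Q₀ᵀ; …; Q_Nᵀ]ᵀ is nonnegative. Then for every T₀ ≥ 0, the block-Toeplitz matrix Q̄_{T₀} ∈ ℝ^{(T₀+1)m×(T₀+1)m} whose (j,k) block is Q_{k−j} if |k−j| ≤ N and 0 otherwise, is doubly hyperdominant. -/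
open Matrix

lemma key_hyperdom (N n : ℕ) (g : ℤ → ℝ)
    (hneg : ∀ i : ℤ, i ≠ 0 → i.natAbs ≤ N → g i ≤ 0)
    (hsum : 0 ≤ ∑ i ∈ Finset.Icc (-(N : ℤ)) N, g i)
    (φ : Fin n → ℤ) (hinj : Function.Injective φ)
    (h0 : ∃ k, φ k = 0) :
    0 ≤ ∑ k, if (φ k).natAbs ≤ N then g (φ k) else 0 := by
  have himg : ∑ k, (if (φ k).natAbs ≤ N then g (φ k) else 0)
      = ∑ i ∈ Finset.univ.image φ, (if i.natAbs ≤ N then g i else 0) := by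
    rw [Finset.sum_image (fun a _ b _ h => hinj h)]
  set T : Finset ℤ := (Finset.univ.image φ).filter (fun i => i.natAbs ≤ N) with hT
  have hfilter : ∑ i ∈ Finset.univ.image φ, (if i.natAbs ≤ N then g i else 0)
      = ∑ i ∈ T, g i := (Finset.sum_filter _ _).symm
  have hTsub : T ⊆ Finset.Icc (-(N : ℤ)) N := by
    intro i hi
    simp only [hT, Finset.mem_filter] at hi
    simp only [Finset.mem_Icc]
    omega
  have h0T : (0 : ℤ) ∈ T := by
    obtain ⟨k, hk⟩ := h0
    simp only [hT, Finset.mem_filter, Finset.mem_image]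
    exact ⟨⟨k, Finset.mem_univ k, hk⟩, by simp⟩
  have hsdiff := Finset.sum_sdiff (f := g) hTsub
  have hnegsum : ∑ i ∈ Finset.Icc (-(N : ℤ)) N \ T, g i ≤ 0 := by
    apply Finset.sum_nonpos
    intro i hi
    rw [Finset.mem_sdiff, Finset.mem_Icc] at hi
    have hiT : i ≠ 0 := fun h => hi.2 (h ▸ h0T)
    exact hneg i hiT (by omega)
  rw [himg, hfilter]
  linarith

/-- The block-Toeplitz matrix built from matrices {Qᵢ} satisfying the
sign and row/column sum conditions is doubly hyperdominant. -/
theorem blockToeplitz_doubly_hyperdominant (m N : ℕ)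
    (Q : ℤ → Matrix (Fin m) (Fin m) ℝ)
    (h1 : ∀ i : ℤ, i ≠ 0 → i.natAbs ≤ N → ∀ a b, Q i a b ≤ 0)
    (h2 : ∀ a b : Fin m, a ≠ b → Q 0 a b ≤ 0)
    (h3 : ∀ a : Fin m, 0 ≤ ∑ i ∈ Finset.Icc (-(N : ℤ)) N, ∑ b, Q i a b)
    (h4 : ∀ b : Fin m, 0 ≤ ∑ i ∈ Finset.Icc (-(N : ℤ)) N, ∑ a, Q i a b)
    (T₀ : ℕ)
    (Qbar : Matrix (Fin (T₀ + 1) × Fin m) (Fin (T₀ + 1) × Fin m) ℝ)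
    (hQbar : ∀ p q, Qbar p q =
      if ((q.1.val : ℤ) - (p.1.val : ℤ)).natAbs ≤ N then
        Q ((q.1.val : ℤ) - (p.1.val : ℤ)) p.2 q.2
      else 0) :
    (∀ p q, p ≠ q → Qbar p q ≤ 0) ∧
    (∀ p, 0 ≤ ∑ q, Qbar p q) ∧
    (∀ q, 0 ≤ ∑ p, Qbar p q) := by
  have hite : ∀ (c : Prop) [Decidable c] (f : Fin m → ℝ),
      (∑ b, if c then f b else 0) = if c then ∑ b, f b else 0 := by
    intro c _ f; split <;> simp
  refine ⟨?_, ?_, ?_⟩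
  · intro p q hpq
    rw [hQbar]
    split
    · rcases eq_or_ne ((q.1.val : ℤ) - (p.1.val : ℤ)) 0 with h | h
      · have h1eq : p.1 = q.1 := by
          have := Fin.val_injective (n := T₀ + 1)
          apply Fin.val_injective; omega
      
        rw [h]
        have h2eq : p.2 ≠ q.2 := by
          intro h'
          exact hpq (Prod.ext h1eq h')
        exact h2 _ _ h2eq
      · exact h1 _ h ‹_› _ _
    · exact le_refl 0
  · intro p
    have := key_hyperdom N (T₀ + 1) (fun i => ∑ b, Q i p.2 b)
      (fun i hi hiN => Finset.sum_nonpos (fun b _ => h1 i hi hiN p.2 b))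
      (h3 p.2)
      (fun k => (k.val : ℤ) - (p.1.val : ℤ))
      (fun a b h => by simp only at h; apply Fin.val_injective; omega)
      ⟨p.1, by ring⟩
    calc (0 : ℝ) ≤ _ := this
      _ = ∑ q, Qbar p q := by
        rw [Fintype.sum_prod_type]
        refine Finset.sum_congr rfl fun k _ => ?_
        simp only [hQbar, hite]
  · intro q
    have := key_hyperdom N (T₀ + 1) (fun i => ∑ a, Q i a q.2)
      (fun i hi hiN => Finset.sum_nonpos (fun a _ => h1 i hi hiN a q.2))
      (h4 q.2)
      (fun j => (q.1.val : ℤ) - (j.val : ℤ))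
      (fun a b h => by simp only at h; apply Fin.val_injective; omega)
      ⟨q.1, by ring⟩
    calc (0 : ℝ) ≤ _ := this
      _ = ∑ p, Qbar p q := by
        rw [Fintype.sum_prod_type]
        refine Finset.sum_congr rfl fun j _ => ?_
        simp only [hQbar, hite]
end

section
/- (Dynamic IQC for repeated ReLU, finite-sum form.) Let Φ : ℝ^m → ℝ^m be the repeated ReLU, and let v : ℕ → ℝ^m be any sequence with w(k) = Φ(v(k)), with the convention v(j) = w(j) = 0 for j < 0. Let {Qᵢ¹}_{i=0}^N, {Qᵢ²}_{i=0}^N be symmetric entrywise-nonnegative m×m matrices and {Qᵢ³}_{i=−N}^N be m×m matrices with Qᵢ³ entrywise nonnegative for i ≠ 0 and Q₀³ Metzler. Define the block-Toeplitz matrices Q̄¹, Q̄², Q̄³ ∈ ℝ^{(T₀+1)m×(T₀+1)m} (blocks Q¹_{|k−j|}, Q²_{|k−j|}, Q³_{k−j} respectively, zero for |k−j| > N). Then for every T₀ ≥ 0, with v̄ and w̄ the stacked vectors of v(T₀),…,v(0) and w(T₀),…,w(0): v̄ᵀQ̄¹v̄ − v̄ᵀ(Q̄³ᵀ + Q̄¹)w̄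 − w̄ᵀ(Q̄³ + Q̄¹)v̄ + w̄ᵀ(Q̄¹ + Q̄² + Q̄³ + Q̄³ᵀ)w̄ ≥ 0. -/
open Matrix Finset

theorem relu_static_key {ι : Type*} [Fintype ι] [DecidableEq ι]
    (x y : ι → ℝ) (hy : ∀ p, y p = max (x p) 0)
    (A B C : Matrix ι ι ℝ)
    (hA : ∀ p q, 0 ≤ A p q) (hB : ∀ p q, 0 ≤ B p q)
    (hC : ∀ p q, p ≠ q → 0 ≤ C p q) :
    0 ≤ x ⬝ᵥ (A *ᵥ x) - x ⬝ᵥ ((Cᵀ + A) *ᵥ y) - y ⬝ᵥ ((C + A) *ᵥ x)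
        + y ⬝ᵥ ((A + B + C + Cᵀ) *ᵥ y) := by
  have hy0 : ∀ p, 0 ≤ y p := fun p => (hy p) ▸ le_max_right _ _
  have hxy : ∀ p, x p - y p ≤ 0 := fun p => by
    rw [hy p]; simp [sub_nonpos, le_max_left]
  have hcomp : ∀ p, y p * (y p - x p) = 0 := fun p => by
    rcases le_or_gt (x p) 0 with h | h
    · rw [hy p, max_eq_right h]; ring
    · rw [hy p, max_eq_left h.le]; ring
  have e1 : x ⬝ᵥ (Cᵀ *ᵥ y) = y ⬝ᵥ (C *ᵥ x) := by
    rw [Matrix.dotProduct_mulVec, Matrix.vecMul_transpose, dotProduct_comm]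
  have e2 : y ⬝ᵥ (Cᵀ *ᵥ y) = y ⬝ᵥ (C *ᵥ y) := by
    rw [Matrix.dotProduct_mulVec, Matrix.vecMul_transpose, dotProduct_comm]
  have hS : 0 ≤ ∑ p, ∑ q, (A p q * ((x p - y p) * (x q - y q))
      + B p q * (y p * y q) + 2 * C p q * (y p * (y q - x q))) := by
    refine Finset.sum_nonneg fun p _ => Finset.sum_nonneg fun q _ => ?_
    have t1 : 0 ≤ A p q * ((x p - y p) * (x q - y q)) :=
      mul_nonneg (hA p q) (mul_nonneg_of_nonpos_of_nonpos (hxy p) (hxy q))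
    have t2 : 0 ≤ B p q * (y p * y q) :=
      mul_nonneg (hB p q) (mul_nonneg (hy0 p) (hy0 q))
    have t3 : 0 ≤ 2 * C p q * (y p * (y q - x q)) := by
      by_cases hpq : p = q
      · subst hpq; rw [hcomp p]; ring_nf; simp
      · exact mul_nonneg (mul_nonneg (by norm_num) (hC p q hpq))
          (mul_nonneg (hy0 p) (by linarith [hxy q]))
    linarith
  have hE : x ⬝ᵥ (A *ᵥ x) - x ⬝ᵥ ((Cᵀ + A) *ᵥ y) - y ⬝ᵥ ((C + A) *ᵥ x)
        + y ⬝ᵥ ((A + B + C + Cᵀ) *ᵥ y)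
      = ∑ p, ∑ q, (A p q * ((x p - y p) * (x q - y q))
        + B p q * (y p * y q) + 2 * C p q * (y p * (y q - x q))) := by
    simp only [Matrix.add_mulVec, dotProduct_add, e1, e2]
    simp only [dotProduct, mulVec, Finset.mul_sum, ← Finset.sum_sub_distrib,
      ← Finset.sum_add_distrib]
    exact Finset.sum_congr rfl fun p _ => Finset.sum_congr rfl fun q _ => by ring
  linarith

/-- Dynamic IQC for the repeated ReLU, finite-sum (stacked) form
(Lemma 5). -/
theorem repeated_relu_dynamic_IQC (m N : ℕ)
    (v w : ℕ → Fin m → ℝ)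
    (hw : ∀ k i, w k i = max (v k i) 0)
    (Q1 Q2 : ℕ → Matrix (Fin m) (Fin m) ℝ)
    (hQ1s : ∀ i, i ≤ N → (Q1 i)ᵀ = Q1 i)
    (hQ2s : ∀ i, i ≤ N → (Q2 i)ᵀ = Q2 i)
    (hQ1n : ∀ i, i ≤ N → ∀ a b, 0 ≤ Q1 i a b)
    (hQ2n : ∀ i, i ≤ N → ∀ a b, 0 ≤ Q2 i a b)
    (Q3 : ℤ → Matrix (Fin m) (Fin m) ℝ)
    (hQ3n : ∀ i : ℤ, i ≠ 0 → i.natAbs ≤ N → ∀ a b, 0 ≤ Q3 i a b)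
    (hQ3M : ∀ a b : Fin m, a ≠ b → 0 ≤ Q3 0 a b)
    (T₀ : ℕ)
    (Qbar1 Qbar2 Qbar3 : Matrix (Fin (T₀ + 1) × Fin m) (Fin (T₀ + 1) × Fin m) ℝ)
    (hQbar1 : ∀ p q, Qbar1 p q =
      if ((q.1.val : ℤ) - (p.1.val : ℤ)).natAbs ≤ N then
        Q1 (((q.1.val : ℤ) - (p.1.val : ℤ)).natAbs) p.2 q.2 else 0)
    (hQbar2 : ∀ p q, Qbar2 p q =
      if ((q.1.val : ℤ) - (p.1.val : ℤ)).natAbs ≤ N then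
        Q2 (((q.1.val : ℤ) - (p.1.val : ℤ)).natAbs) p.2 q.2 else 0)
    (hQbar3 : ∀ p q, Qbar3 p q =
      if ((q.1.val : ℤ) - (p.1.val : ℤ)).natAbs ≤ N then
        Q3 ((q.1.val : ℤ) - (p.1.val : ℤ)) p.2 q.2 else 0)
    (vbar wbar : Fin (T₀ + 1) × Fin m → ℝ)
    (hvbar : ∀ p, vbar p = v (T₀ - p.1.val) p.2)
    (hwbar : ∀ p, wbar p = w (T₀ - p.1.val) p.2) :
    0 ≤ vbar ⬝ᵥ (Qbar1 *ᵥ vbar) - vbar ⬝ᵥ ((Qbar3ᵀ + Qbar1) *ᵥ wbar)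
        - wbar ⬝ᵥ ((Qbar3 + Qbar1) *ᵥ vbar)
        + wbar ⬝ᵥ ((Qbar1 + Qbar2 + Qbar3 + Qbar3ᵀ) *ᵥ wbar) := by
  refine relu_static_key vbar wbar ?_ Qbar1 Qbar2 Qbar3 ?_ ?_ ?_
  · intro p; rw [hwbar, hvbar, hw]
  · intro p q; rw [hQbar1]; split_ifs with h
    · exact hQ1n _ h _ _
    · exact le_refl 0
  · intro p q; rw [hQbar2]; split_ifs with h
    · exact hQ2n _ h _ _
    · exact le_refl 0
  · intro p q hpq; rw [hQbar3]; split_ifs with h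
    · by_cases hi : ((q.1.val : ℤ) - (p.1.val : ℤ)) = 0
      · have h1 : p.1 = q.1 := Fin.ext (by omega)
        have h2 : p.2 ≠ q.2 := fun h2 => hpq (Prod.ext h1 h2)
        rw [hi]; exact hQ3M _ _ h2
      · exact hQ3n _ hi h _ _
    · exact le_refl 0
end

section
/- (Dynamic IQC for repeated slope-restricted nonlinearity, finite-sum form.) Let f : ℝ → ℝ with f(0) = 0 slope-restricted to [0,1], F its componentwise extension to ℝ^m, and v : ℕ → ℝ^m with w(k) = F(v(k)). Let {Qᵢ}_{i=−N}^N ⊂ ℝ^{m×m} satisfy the sign and row/column-sum conditions making every finite block-Toeplitz matrix Q̄_{T₀} doubly hyperdominant. Then for every T₀ ≥ 0, with v̄, w̄ the stacked vectors: v̄ᵀ Q̄_{T₀}ᵀ w̄ + w̄ᵀ Q̄_{T₀} v̄ − w̄ᵀ(Q̄_{T₀} + Q̄_{T₀}ᵀ)w̄ ≥ 0. -/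
open Matrix

section DHDAux

open Finset

set_option linter.unusedSectionVars false


variable {ι : Type*} [Fintype ι] [DecidableEq ι]

lemma row_ind (M : ι → ι → ℝ)
    (hoff : ∀ p q, p ≠ q → M p q ≤ 0) (hrow : ∀ p, 0 ≤ ∑ q, M p q)
    (χ : ι → ℝ) (hχ : ∀ q, χ q = 0 ∨ χ q = 1) (p : ι) (hp : χ p = 1) :
    0 ≤ ∑ q, M p q * χ q := by
  have h1 : ∑ q, M p q ≤ ∑ q, M p q * χ q := by
    apply Finset.sum_le_sum
    intro q _
    rcases hχ q with h | h
    · rcases eq_or_ne p q with rfl | hne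
      · rw [hp] at h; norm_num at h
      · rw [h, mul_zero]; exact hoff p q hne
    · rw [h, mul_one]
  linarith [hrow p]

lemma col_ind (M : ι → ι → ℝ)
    (hoff : ∀ p q, p ≠ q → M p q ≤ 0) (hcol : ∀ q, 0 ≤ ∑ p, M p q)
    (χ : ι → ℝ) (hχ : ∀ q, χ q = 0 ∨ χ q = 1) (q : ι) (hq : χ q = 1) :
    0 ≤ ∑ p, M p q * χ p := by
  have h1 : ∑ p, M p q ≤ ∑ p, M p q * χ p := by
    apply Finset.sum_le_sum
    intro p _
    rcases hχ p with h | h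
    · rcases eq_or_ne p q with rfl | hne
      · rw [hq] at h; norm_num at h
      · rw [h, mul_zero]; exact hoff p q hne
    · rw [h, mul_one]
  linarith [hcol q]

lemma quad_ind (M : ι → ι → ℝ)
    (hoff : ∀ p q, p ≠ q → M p q ≤ 0) (hrow : ∀ p, 0 ≤ ∑ q, M p q)
    (χ : ι → ℝ) (hχ : ∀ q, χ q = 0 ∨ χ q = 1) :
    0 ≤ ∑ p, ∑ q, M p q * χ p * χ q := by
  apply Finset.sum_nonneg; intro p _
  rcases hχ p with h | h
  · simp [h]
  · have h0 := row_ind M hoff hrow χ hχ p h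
    calc (0:ℝ) ≤ ∑ q, M p q * χ q := h0
      _ = ∑ q, M p q * χ p * χ q := by
          apply Finset.sum_congr rfl; intro q _; rw [h]; ring

/-- Willems-type lemma, nonnegative nested case, by induction on the support. -/
lemma lemA (M : ι → ι → ℝ)
    (hoff : ∀ p q, p ≠ q → M p q ≤ 0)
    (hrow : ∀ p, 0 ≤ ∑ q, M p q) (hcol : ∀ q, 0 ≤ ∑ p, M p q) :
    ∀ (n : ℕ) (u v : ι → ℝ),
      (Finset.univ.filter (fun p => ¬(u p = 0 ∧ v p = 0))).card ≤ n →
      (∀ p, 0 ≤ u p) → (∀ p, 0 ≤ v p) →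
      (∀ p q, (u p ≤ u q ∧ v p ≤ v q) ∨ (u q ≤ u p ∧ v q ≤ v p)) →
      0 ≤ ∑ p, ∑ q, M p q * u p * v q := by
  intro n
  induction n with
  | zero =>
      intro u v hcard hu hv _
      have hzero : ∀ p, u p = 0 ∧ v p = 0 := by
        intro p
        by_contra hp
        have hmem : p ∈ Finset.univ.filter (fun p => ¬(u p = 0 ∧ v p = 0)) :=
          Finset.mem_filter.mpr ⟨Finset.mem_univ p, hp⟩
        have := Finset.card_pos.mpr ⟨p, hmem⟩
        omega
      have hz : ∀ p, ∑ q, M p q * u p * v q = 0 := by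
        intro p; apply Finset.sum_eq_zero; intro q _
        rw [(hzero p).1]; ring
      simp [hz]
  | succ n ih =>
      intro u v hcard hu hv hnest
      set T := Finset.univ.filter (fun p => ¬(u p = 0 ∧ v p = 0)) with hT
      by_cases hsmall : T.card ≤ n
      · exact ih u v hsmall hu hv hnest
      have hTne : T.Nonempty := by
        rw [← Finset.card_pos]; omega
      obtain ⟨p0, hp0T, hp0min⟩ := T.exists_min_image (fun p => u p + v p) hTne
      have hmin : ∀ q ∈ T, u p0 ≤ u q ∧ v p0 ≤ v q := by
        intro q hq
        rcases hnest p0 q with h | ⟨hh1, hh2⟩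
        · exact h
        · have := hp0min q hq; constructor <;> linarith
      have hnotT : ∀ p, p ∉ T → u p = 0 ∧ v p = 0 := by
        intro p hp
        by_contra h
        exact hp (Finset.mem_filter.mpr ⟨Finset.mem_univ p, h⟩)
      have hc : 0 ≤ u p0 := hu p0
      have hd : 0 ≤ v p0 := hv p0
      set χ : ι → ℝ := fun p => if p ∈ T then 1 else 0 with hχdef
      have hχ : ∀ p, χ p = 0 ∨ χ p = 1 := by
        intro p; by_cases h : p ∈ T <;> simp [hχdef, h]
      have hχT : ∀ p ∈ T, χ p = 1 := by intro p hp; simp [hχdef, hp]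
      have hχN : ∀ p, p ∉ T → χ p = 0 := by intro p hp; simp [hχdef, hp]
      set u' : ι → ℝ := fun p => u p - u p0 * χ p with hu'def
      set v' : ι → ℝ := fun p => v p - v p0 * χ p with hv'def
      have huT : ∀ p ∈ T, u' p = u p - u p0 := by
        intro p hp; simp [hu'def, hχT p hp]
      have hvT : ∀ p ∈ T, v' p = v p - v p0 := by
        intro p hp; simp [hv'def, hχT p hp]
      have huN : ∀ p, p ∉ T → u' p = 0 := by
        intro p hp; simp [hu'def, hχN p hp, (hnotT p hp).1]
      have hvN : ∀ p, p ∉ T → v' p = 0 := by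
        intro p hp; simp [hv'def, hχN p hp, (hnotT p hp).2]
      have hu' : ∀ p, 0 ≤ u' p := by
        intro p
        by_cases h : p ∈ T
        · rw [huT p h]; linarith [(hmin p h).1]
        · rw [huN p h]
      have hv' : ∀ p, 0 ≤ v' p := by
        intro p
        by_cases h : p ∈ T
        · rw [hvT p h]; linarith [(hmin p h).2]
        · rw [hvN p h]
      have hnest' : ∀ p q, (u' p ≤ u' q ∧ v' p ≤ v' q) ∨ (u' q ≤ u' p ∧ v' q ≤ v' p) := by
        intro p q
        by_cases hp : p ∈ T <;> by_cases hq : q ∈ T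
        · rcases hnest p q with h | h
          · left; rw [huT p hp, huT q hq, hvT p hp, hvT q hq]
            constructor <;> linarith [h.1, h.2]
          · right; rw [huT p hp, huT q hq, hvT p hp, hvT q hq]
            constructor <;> linarith [h.1, h.2]
        · right; rw [huN q hq, hvN q hq]; exact ⟨hu' p, hv' p⟩
        · left; rw [huN p hp, hvN p hp]; exact ⟨hu' q, hv' q⟩
        · left; rw [huN p hp, hvN p hp, huN q hq, hvN q hq]; exact ⟨le_refl _, le_refl _⟩
      -- strictly smaller support
      have hsub : (Finset.univ.filter (fun p => ¬(u' p = 0 ∧ v' p = 0))) ⊆ T.erase p0 := by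
        intro p hp
        simp only [Finset.mem_filter, Finset.mem_univ, true_and] at hp
        rw [Finset.mem_erase]
        constructor
        · intro heq
          apply hp
          rw [heq]
          exact ⟨by rw [huT p0 hp0T]; ring, by rw [hvT p0 hp0T]; ring⟩
        · by_contra h
          exact hp ⟨huN p h, hvN p h⟩
      have hS' : 0 ≤ ∑ p, ∑ q, M p q * u' p * v' q := by
        apply ih u' v' ?_ hu' hv' hnest'
        calc (Finset.univ.filter (fun p => ¬(u' p = 0 ∧ v' p = 0))).card
            ≤ (T.erase p0).card := Finset.card_le_card hsub
          _ = T.card - 1 := Finset.card_erase_of_mem hp0T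
          _ ≤ n := by omega
      have hA : 0 ≤ ∑ p, ∑ q, M p q * u' p * (v p0 * χ q) := by
        apply Finset.sum_nonneg; intro p _
        by_cases hp : u' p = 0
        · rw [Finset.sum_eq_zero]; intro q _; rw [hp]; ring
        · have hpT : p ∈ T := by
            by_contra h; exact hp (huN p h)
          have h0 : 0 ≤ ∑ q, M p q * χ q := row_ind M hoff hrow χ hχ p (hχT p hpT)
          have heq : ∑ q, M p q * u' p * (v p0 * χ q) = (u' p * v p0) * ∑ q, M p q * χ q := by
            rw [Finset.mul_sum]; apply Finset.sum_congr rfl; intro q _; ring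
          rw [heq]
          exact mul_nonneg (mul_nonneg (hu' p) hd) h0
      have hB : 0 ≤ ∑ p, ∑ q, M p q * (u p0 * χ p) * v' q := by
        rw [Finset.sum_comm]
        apply Finset.sum_nonneg; intro q _
        by_cases hq : v' q = 0
        · rw [Finset.sum_eq_zero]; intro p _; rw [hq]; ring
        · have hqT : q ∈ T := by
            by_contra h; exact hq (hvN q h)
          have h0 : 0 ≤ ∑ p, M p q * χ p := col_ind M hoff hcol χ hχ q (hχT q hqT)
          have heq : ∑ p, M p q * (u p0 * χ p) * v' q = (u p0 * v' q) * ∑ p, M p q * χ p := by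
            rw [Finset.mul_sum]; apply Finset.sum_congr rfl; intro p _; ring
          rw [heq]
          exact mul_nonneg (mul_nonneg hc (hv' q)) h0
      have hC : 0 ≤ ∑ p, ∑ q, M p q * (u p0 * χ p) * (v p0 * χ q) := by
        have h0 := quad_ind M hoff hrow χ hχ
        have heq : ∑ p, ∑ q, M p q * (u p0 * χ p) * (v p0 * χ q)
            = (u p0 * v p0) * ∑ p, ∑ q, M p q * χ p * χ q := by
          rw [Finset.mul_sum]; apply Finset.sum_congr rfl; intro p _
          rw [Finset.mul_sum]; apply Finset.sum_congr rfl; intro q _; ring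
        rw [heq]
        exact mul_nonneg (mul_nonneg hc hd) h0
      have hid : ∑ p, ∑ q, M p q * u p * v q
          = ∑ p, ∑ q, (M p q * u' p * v' q + M p q * u' p * (v p0 * χ q)
            + M p q * (u p0 * χ p) * v' q + M p q * (u p0 * χ p) * (v p0 * χ q)) := by
        apply Finset.sum_congr rfl; intro p _
        apply Finset.sum_congr rfl; intro q _
        have h1 : u p = u' p + u p0 * χ p := by rw [hu'def]; ring
        have h2 : v q = v' q + v p0 * χ q := by rw [hv'def]; ring
        calc M p q * u p * v q
            = M p q * (u' p + u p0 * χ p) * (v' q + v p0 * χ q) := by rw [← h1, ← h2]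
          _ = _ := by ring
      rw [hid]
      have hsplit : ∑ p, ∑ q, (M p q * u' p * v' q + M p q * u' p * (v p0 * χ q)
            + M p q * (u p0 * χ p) * v' q + M p q * (u p0 * χ p) * (v p0 * χ q))
          = (∑ p, ∑ q, M p q * u' p * v' q) + (∑ p, ∑ q, M p q * u' p * (v p0 * χ q))
            + (∑ p, ∑ q, M p q * (u p0 * χ p) * v' q)
            + (∑ p, ∑ q, M p q * (u p0 * χ p) * (v p0 * χ q)) := by
        rw [← Finset.sum_add_distrib, ← Finset.sum_add_distrib, ← Finset.sum_add_distrib]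
        apply Finset.sum_congr rfl; intro p _
        rw [← Finset.sum_add_distrib, ← Finset.sum_add_distrib, ← Finset.sum_add_distrib]
      rw [hsplit]
      linarith

lemma main_ineq (M : ι → ι → ℝ)
    (hoff : ∀ p q, p ≠ q → M p q ≤ 0)
    (hrow : ∀ p, 0 ≤ ∑ q, M p q) (hcol : ∀ q, 0 ≤ ∑ p, M p q)
    (a b : ι → ℝ)
    (hco : ∀ p q, (a p ≤ a q ∧ b p ≤ b q) ∨ (a q ≤ a p ∧ b q ≤ b p))
    (hsign : ∀ p, (0 ≤ a p ∧ 0 ≤ b p) ∨ (a p ≤ 0 ∧ b p ≤ 0)) :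
    0 ≤ ∑ p, ∑ q, M p q * a p * b q := by
  set ap : ι → ℝ := fun p => max (a p) 0 with hapdef
  set am : ι → ℝ := fun p => max (-(a p)) 0 with hamdef
  set bp : ι → ℝ := fun p => max (b p) 0 with hbpdef
  set bm : ι → ℝ := fun p => max (-(b p)) 0 with hbmdef
  have hsplit : ∀ t : ℝ, t = max t 0 - max (-t) 0 := by
    intro t
    rcases le_total t 0 with h | h
    · rw [max_eq_right h, max_eq_left (by linarith : (0:ℝ) ≤ -t)]; ring
    · rw [max_eq_left h, max_eq_right (by linarith : -t ≤ 0)]; ring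
  have hap0 : ∀ p, 0 ≤ ap p := fun p => le_max_right _ _
  have ham0 : ∀ p, 0 ≤ am p := fun p => le_max_right _ _
  have hbp0 : ∀ p, 0 ≤ bp p := fun p => le_max_right _ _
  have hbm0 : ∀ p, 0 ≤ bm p := fun p => le_max_right _ _
  -- nestedness
  have hco1 : ∀ p q, (ap p ≤ ap q ∧ bp p ≤ bp q) ∨ (ap q ≤ ap p ∧ bp q ≤ bp p) := by
    intro p q
    rcases hco p q with h | h
    · exact Or.inl ⟨max_le_max h.1 le_rfl, max_le_max h.2 le_rfl⟩
    · exact Or.inr ⟨max_le_max h.1 le_rfl, max_le_max h.2 le_rfl⟩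
  have hco2 : ∀ p q, (am p ≤ am q ∧ bm p ≤ bm q) ∨ (am q ≤ am p ∧ bm q ≤ bm p) := by
    intro p q
    rcases hco p q with h | h
    · exact Or.inr ⟨max_le_max (neg_le_neg h.1) le_rfl, max_le_max (neg_le_neg h.2) le_rfl⟩
    · exact Or.inl ⟨max_le_max (neg_le_neg h.1) le_rfl, max_le_max (neg_le_neg h.2) le_rfl⟩
  have hS1 : 0 ≤ ∑ p, ∑ q, M p q * ap p * bp q :=
    lemA M hoff hrow hcol _ ap bp le_rfl hap0 hbp0 hco1
  have hS2 : 0 ≤ ∑ p, ∑ q, M p q * am p * bm q :=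
    lemA M hoff hrow hcol _ am bm le_rfl ham0 hbm0 hco2
  have hS3 : ∑ p, ∑ q, M p q * ap p * bm q ≤ 0 := by
    apply Finset.sum_nonpos; intro p _
    apply Finset.sum_nonpos; intro q _
    by_cases h1 : ap p = 0
    · rw [h1]; simp
    by_cases h2 : bm q = 0
    · rw [h2]; simp
    have hap : 0 < a p := by
      have : 0 < ap p := lt_of_le_of_ne (hap0 p) (Ne.symm h1)
      rcases lt_max_iff.mp this with h | h
      · exact h
      · exact absurd h (lt_irrefl 0)
    have hbq : b q < 0 := by
      have : 0 < bm q := lt_of_le_of_ne (hbm0 q) (Ne.symm h2)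
      rcases lt_max_iff.mp this with h | h
      · linarith
      · exact absurd h (lt_irrefl 0)
    have haq : a q ≤ 0 := by
      rcases hsign q with h | h
      · linarith [h.2]
      · exact h.1
    have hne : p ≠ q := by
      intro heq; rw [heq] at hap; linarith
    have hM := hoff p q hne
    have := mul_nonneg (hap0 p) (hbm0 q)
    nlinarith
  have hS4 : ∑ p, ∑ q, M p q * am p * bp q ≤ 0 := by
    apply Finset.sum_nonpos; intro p _
    apply Finset.sum_nonpos; intro q _
    by_cases h1 : am p = 0
    · rw [h1]; simp
    by_cases h2 : bp q = 0
    · rw [h2]; simp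
    have hap : a p < 0 := by
      have : 0 < am p := lt_of_le_of_ne (ham0 p) (Ne.symm h1)
      rcases lt_max_iff.mp this with h | h
      · linarith
      · exact absurd h (lt_irrefl 0)
    have hbq : 0 < b q := by
      have : 0 < bp q := lt_of_le_of_ne (hbp0 q) (Ne.symm h2)
      rcases lt_max_iff.mp this with h | h
      · exact h
      · exact absurd h (lt_irrefl 0)
    have haq : 0 ≤ b p ∨ b p ≤ 0 := le_total 0 (b p)
    have hbp' : b p ≤ 0 := by
      rcases hsign p with h | h
      · linarith [h.1]
      · exact h.2
    have hne : p ≠ q := by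
      intro heq; rw [heq] at hbp'; linarith
    have hM := hoff p q hne
    have := mul_nonneg (ham0 p) (hbp0 q)
    nlinarith
  have hid : ∑ p, ∑ q, M p q * a p * b q
      = (∑ p, ∑ q, M p q * ap p * bp q) + (∑ p, ∑ q, M p q * am p * bm q)
        - (∑ p, ∑ q, M p q * ap p * bm q) - (∑ p, ∑ q, M p q * am p * bp q) := by
    rw [← Finset.sum_add_distrib, ← Finset.sum_sub_distrib, ← Finset.sum_sub_distrib]
    apply Finset.sum_congr rfl; intro p _
    rw [← Finset.sum_add_distrib, ← Finset.sum_sub_distrib, ← Finset.sum_sub_distrib]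
    apply Finset.sum_congr rfl; intro q _
    calc M p q * a p * b q
        = M p q * (max (a p) 0 - max (-(a p)) 0) * (max (b q) 0 - max (-(b q)) 0) := by
          rw [← hsplit (a p), ← hsplit (b q)]
      _ = _ := by rw [hapdef, hamdef, hbpdef, hbmdef]; ring
  rw [hid]
  linarith

end DHDAux

/-- Dynamic IQC for a repeated slope-restricted nonlinearity, finite-sum
(stacked) form (Lemma 3). -/
theorem slope_restricted_dynamic_IQC (m N : ℕ)
    (f : ℝ → ℝ) (hf0 : f 0 = 0)
    (hslope : ∀ a b : ℝ, a ≠ b →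
      0 ≤ (f b - f a) / (b - a) ∧ (f b - f a) / (b - a) ≤ 1)
    (v w : ℕ → Fin m → ℝ)
    (hw : ∀ k i, w k i = f (v k i))
    (Q : ℤ → Matrix (Fin m) (Fin m) ℝ)
    (h1 : ∀ i : ℤ, i ≠ 0 → i.natAbs ≤ N → ∀ a b, Q i a b ≤ 0)
    (h2 : ∀ a b : Fin m, a ≠ b → Q 0 a b ≤ 0)
    (h3 : ∀ a : Fin m, 0 ≤ ∑ i ∈ Finset.Icc (-(N : ℤ)) N, ∑ b, Q i a b)
    (h4 : ∀ b : Fin m, 0 ≤ ∑ i ∈ Finset.Icc (-(N : ℤ)) N, ∑ a, Q i a b)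
    (T₀ : ℕ)
    (Qbar : Matrix (Fin (T₀ + 1) × Fin m) (Fin (T₀ + 1) × Fin m) ℝ)
    (hQbar : ∀ p q, Qbar p q =
      if ((q.1.val : ℤ) - (p.1.val : ℤ)).natAbs ≤ N then
        Q ((q.1.val : ℤ) - (p.1.val : ℤ)) p.2 q.2 else 0)
    (vbar wbar : Fin (T₀ + 1) × Fin m → ℝ)
    (hvbar : ∀ p, vbar p = v (T₀ - p.1.val) p.2)
    (hwbar : ∀ p, wbar p = w (T₀ - p.1.val) p.2) :
    0 ≤ vbar ⬝ᵥ (Qbarᵀ *ᵥ wbar) + wbar ⬝ᵥ (Qbar *ᵥ vbar)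
        - wbar ⬝ᵥ ((Qbar + Qbarᵀ) *ᵥ wbar) := by
  -- monotonicity consequences of the slope restriction
  have hfmono : ∀ s t : ℝ, s ≤ t → f s ≤ f t := by
    intro s t hst
    rcases eq_or_lt_of_le hst with rfl | hlt
    · exact le_refl _
    · have h := hslope s t (ne_of_lt hlt)
      have hpos : (0:ℝ) < t - s := by linarith
      have h1' := mul_nonneg h.1 (le_of_lt hpos)
      rw [div_mul_cancel₀ _ (ne_of_gt hpos)] at h1'
      linarith
  have hgmono : ∀ s t : ℝ, s ≤ t → s - f s ≤ t - f t := by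
    intro s t hst
    rcases eq_or_lt_of_le hst with rfl | hlt
    · exact le_refl _
    · have h := hslope s t (ne_of_lt hlt)
      have hpos : (0:ℝ) < t - s := by linarith
      have h2' := mul_le_mul_of_nonneg_right h.2 (le_of_lt hpos)
      rw [div_mul_cancel₀ _ (ne_of_gt hpos), one_mul] at h2'
      linarith
  have hwv : ∀ p, wbar p = f (vbar p) := by
    intro p; rw [hwbar, hw, hvbar]
  set b : Fin (T₀ + 1) × Fin m → ℝ := fun p => vbar p - wbar p with hbdef
  -- comonotone
  have hco : ∀ p q, (wbar p ≤ wbar q ∧ b p ≤ b q) ∨ (wbar q ≤ wbar p ∧ b q ≤ b p) := by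
    intro p q
    rcases le_total (vbar p) (vbar q) with h | h
    · left
      refine ⟨by rw [hwv p, hwv q]; exact hfmono _ _ h, ?_⟩
      rw [hbdef]; simp only
      rw [hwv p, hwv q]; exact hgmono _ _ h
    · right
      refine ⟨by rw [hwv p, hwv q]; exact hfmono _ _ h, ?_⟩
      rw [hbdef]; simp only
      rw [hwv p, hwv q]; exact hgmono _ _ h
  -- sign
  have hsign : ∀ p, (0 ≤ wbar p ∧ 0 ≤ b p) ∨ (wbar p ≤ 0 ∧ b p ≤ 0) := by
    intro p
    rcases le_total 0 (vbar p) with h | h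
    · left
      constructor
      · rw [hwv p]; have := hfmono 0 _ h; rwa [hf0] at this
      · have := hgmono 0 _ h; rw [hf0] at this
        rw [hbdef]; simp only; rw [hwv p]; linarith
    · right
      constructor
      · rw [hwv p]; have := hfmono _ 0 h; rwa [hf0] at this
      · have := hgmono _ 0 h; rw [hf0] at this
        rw [hbdef]; simp only; rw [hwv p]; linarith
  -- doubly hyperdominant structure of Qbar
  have hoff : ∀ p q, p ≠ q → Qbar p q ≤ 0 := by
    intro p q hne
    rw [hQbar]
    split_ifs with hcnd
    · by_cases hij : p.1 = q.1
      · have hz : ((q.1.val : ℤ) - (p.1.val : ℤ)) = 0 := by rw [hij]; ring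
        rw [hz]
        apply h2
        intro h22
        exact hne (Prod.ext hij h22)
      · apply h1 _ _ hcnd
        intro hz
        apply hij
        have hval : p.1.val = q.1.val := by omega
        exact Fin.ext hval
    · exact le_refl _
  -- row sums
  have hrow : ∀ p, 0 ≤ ∑ q, Qbar p q := by
    intro p
    rw [Fintype.sum_prod_type]
    have hrowform : ∀ j : Fin (T₀ + 1), ∑ bb, Qbar p (j, bb)
        = if ((j.val : ℤ) - (p.1.val : ℤ)).natAbs ≤ N then
            (∑ bb, Q ((j.val : ℤ) - (p.1.val : ℤ)) p.2 bb) else 0 := by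
      intro j
      by_cases hcnd : ((j.val : ℤ) - (p.1.val : ℤ)).natAbs ≤ N
      · rw [if_pos hcnd]
        apply Finset.sum_congr rfl; intro bb _
        rw [hQbar]; exact if_pos hcnd
      · rw [if_neg hcnd]
        apply Finset.sum_eq_zero; intro bb _
        rw [hQbar]; exact if_neg hcnd
    rw [Finset.sum_congr rfl (fun j _ => hrowform j)]
    rw [← Finset.sum_filter]
    have hinj : ∀ x ∈ Finset.univ.filter
        (fun j : Fin (T₀ + 1) => ((j.val : ℤ) - (p.1.val : ℤ)).natAbs ≤ N),
        ∀ y ∈ Finset.univ.filter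
        (fun j : Fin (T₀ + 1) => ((j.val : ℤ) - (p.1.val : ℤ)).natAbs ≤ N),
        ((x.val : ℤ) - (p.1.val : ℤ)) = ((y.val : ℤ) - (p.1.val : ℤ)) → x = y := by
      intro x _ y _ h
      have : (x.val : ℤ) = (y.val : ℤ) := by linarith
      exact Fin.ext (by exact_mod_cast this)
    rw [← Finset.sum_image (f := fun i => ∑ bb, Q i p.2 bb) hinj]
    set D := (Finset.univ.filter
        (fun j : Fin (T₀ + 1) => ((j.val : ℤ) - (p.1.val : ℤ)).natAbs ≤ N)).image
        (fun j : Fin (T₀ + 1) => ((j.val : ℤ) - (p.1.val : ℤ))) with hD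
    have hDsub : D ⊆ Finset.Icc (-(N : ℤ)) N := by
      intro i hi
      rw [hD, Finset.mem_image] at hi
      obtain ⟨j, hj, rfl⟩ := hi
      rw [Finset.mem_filter] at hj
      rw [Finset.mem_Icc]
      omega
    have h0D : (0 : ℤ) ∈ D := by
      rw [hD, Finset.mem_image]
      refine ⟨p.1, ?_, by ring⟩
      rw [Finset.mem_filter]
      refine ⟨Finset.mem_univ _, by simp⟩
    have hsd := Finset.sum_sdiff hDsub (f := fun i => ∑ bb, Q i p.2 bb)
    have hneg : ∑ i ∈ Finset.Icc (-(N : ℤ)) N \ D, ∑ bb, Q i p.2 bb ≤ 0 := by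
      apply Finset.sum_nonpos
      intro i hi
      rw [Finset.mem_sdiff, Finset.mem_Icc] at hi
      have hi0 : i ≠ 0 := by
        intro h; rw [h] at hi; exact hi.2 h0D
      have hiN : i.natAbs ≤ N := by omega
      apply Finset.sum_nonpos
      intro bb _
      exact h1 i hi0 hiN _ _
    have h3' := h3 p.2
    linarith
  -- column sums
  have hcol : ∀ q, 0 ≤ ∑ p, Qbar p q := by
    intro q
    rw [Fintype.sum_prod_type]
    have hcolform : ∀ j : Fin (T₀ + 1), ∑ aa, Qbar (j, aa) q
        = if ((q.1.val : ℤ) - (j.val : ℤ)).natAbs ≤ N then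
            (∑ aa, Q ((q.1.val : ℤ) - (j.val : ℤ)) aa q.2) else 0 := by
      intro j
      by_cases hcnd : ((q.1.val : ℤ) - (j.val : ℤ)).natAbs ≤ N
      · rw [if_pos hcnd]
        apply Finset.sum_congr rfl; intro aa _
        rw [hQbar]; exact if_pos hcnd
      · rw [if_neg hcnd]
        apply Finset.sum_eq_zero; intro aa _
        rw [hQbar]; exact if_neg hcnd
    rw [Finset.sum_congr rfl (fun j _ => hcolform j)]
    rw [← Finset.sum_filter]
    have hinj : ∀ x ∈ Finset.univ.filter
        (fun j : Fin (T₀ + 1) => ((q.1.val : ℤ) - (j.val : ℤ)).natAbs ≤ N),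
        ∀ y ∈ Finset.univ.filter
        (fun j : Fin (T₀ + 1) => ((q.1.val : ℤ) - (j.val : ℤ)).natAbs ≤ N),
        ((q.1.val : ℤ) - (x.val : ℤ)) = ((q.1.val : ℤ) - (y.val : ℤ)) → x = y := by
      intro x _ y _ h
      have : (x.val : ℤ) = (y.val : ℤ) := by linarith
      exact Fin.ext (by exact_mod_cast this)
    rw [← Finset.sum_image (f := fun i => ∑ aa, Q i aa q.2) hinj]
    set D := (Finset.univ.filter
        (fun j : Fin (T₀ + 1) => ((q.1.val : ℤ) - (j.val : ℤ)).natAbs ≤ N)).image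
        (fun j : Fin (T₀ + 1) => ((q.1.val : ℤ) - (j.val : ℤ))) with hD
    have hDsub : D ⊆ Finset.Icc (-(N : ℤ)) N := by
      intro i hi
      rw [hD, Finset.mem_image] at hi
      obtain ⟨j, hj, rfl⟩ := hi
      rw [Finset.mem_filter] at hj
      rw [Finset.mem_Icc]
      omega
    have h0D : (0 : ℤ) ∈ D := by
      rw [hD, Finset.mem_image]
      refine ⟨q.1, ?_, by ring⟩
      rw [Finset.mem_filter]
      refine ⟨Finset.mem_univ _, by simp⟩
    have hsd := Finset.sum_sdiff hDsub (f := fun i => ∑ aa, Q i aa q.2)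
    have hneg : ∑ i ∈ Finset.Icc (-(N : ℤ)) N \ D, ∑ aa, Q i aa q.2 ≤ 0 := by
      apply Finset.sum_nonpos
      intro i hi
      rw [Finset.mem_sdiff, Finset.mem_Icc] at hi
      have hi0 : i ≠ 0 := by
        intro h; rw [h] at hi; exact hi.2 h0D
      have hiN : i.natAbs ≤ N := by omega
      apply Finset.sum_nonpos
      intro aa _
      exact h1 i hi0 hiN _ _
    have h4' := h4 q.2
    linarith
  -- the core inequality
  have hS : 0 ≤ ∑ p, ∑ q, Qbar p q * wbar p * b q :=
    main_ineq (fun p q => Qbar p q) hoff hrow hcol wbar b hco hsign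
  -- algebraic reduction of the quadratic form
  have e1 : vbar ⬝ᵥ (Qbarᵀ *ᵥ wbar) = ∑ p, ∑ q, Qbar p q * wbar p * vbar q := by
    simp only [dotProduct, mulVec, transpose_apply, Finset.mul_sum]
    rw [Finset.sum_comm]
    apply Finset.sum_congr rfl; intro p _
    apply Finset.sum_congr rfl; intro q _
    ring
  have e2 : wbar ⬝ᵥ (Qbar *ᵥ vbar) = ∑ p, ∑ q, Qbar p q * wbar p * vbar q := by
    simp only [dotProduct, mulVec, Finset.mul_sum]
    apply Finset.sum_congr rfl; intro p _
    apply Finset.sum_congr rfl; intro q _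
    ring
  have hBA : ∑ p, ∑ q, Qbar q p * wbar p * wbar q
      = ∑ p, ∑ q, Qbar p q * wbar p * wbar q := by
    rw [Finset.sum_comm]
    apply Finset.sum_congr rfl; intro p _
    apply Finset.sum_congr rfl; intro q _
    ring
  have e3 : wbar ⬝ᵥ ((Qbar + Qbarᵀ) *ᵥ wbar)
      = (∑ p, ∑ q, Qbar p q * wbar p * wbar q) + (∑ p, ∑ q, Qbar p q * wbar p * wbar q) := by
    calc wbar ⬝ᵥ ((Qbar + Qbarᵀ) *ᵥ wbar)
        = ∑ p, ∑ q, wbar p * ((Qbar p q + Qbar q p) * wbar q) := by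
          simp only [dotProduct, mulVec, transpose_apply, Matrix.add_apply, Finset.mul_sum]
      _ = (∑ p, ∑ q, Qbar p q * wbar p * wbar q) + (∑ p, ∑ q, Qbar q p * wbar p * wbar q) := by
          rw [← Finset.sum_add_distrib]
          apply Finset.sum_congr rfl; intro p _
          rw [← Finset.sum_add_distrib]
          apply Finset.sum_congr rfl; intro q _
          ring
      _ = _ := by rw [hBA]
  have hSsplit : ∑ p, ∑ q, Qbar p q * wbar p * b q
      = (∑ p, ∑ q, Qbar p q * wbar p * vbar q) - (∑ p, ∑ q, Qbar p q * wbar p * wbar q) := by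
    rw [← Finset.sum_sub_distrib]
    apply Finset.sum_congr rfl; intro p _
    rw [← Finset.sum_sub_distrib]
    apply Finset.sum_congr rfl; intro q _
    rw [hbdef]; ring
  rw [e1, e2, e3]
  rw [hSsplit] at hS
  linarith
end
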